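/- arXiv:math/0008148 — 3 statements merged into one kernel-verified Lean document; each statement's English description precedes it below -/
import Mathlib

section
/- For every real b > 0, the function w ↦ e^{-2izw} / (sinh(wb)·sinh(w/b)·w) is integrable along the horizontal line ℝ + iε for every ε with 0 < ε < π·min(b, b^{-1}) and every complex z with |Im z| < (b + b^{-1})/2, and the value of the contour integral ∫_{ℝ+iε} e^{-2izw} dw / (sinh(wb)·sinh(w/b)·w) is independent of the choice of ε in that range. -/
noncomputable section
open Complex MeasureTheory Filter Topology Set

/-- The integrand of the contour-integral definition of the non-compact quantum
dilogarithm: `w ↦ exp (-2 i z w) / (sinh (w b) * sinh (w / b) * w)`. -/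
def qdlIntegrand (b z w : ℂ) : ℂ :=
  Complex.exp (-2 * Complex.I * z * w) / (Complex.sinh (w * b) * Complex.sinh (w / b) * w)

lemma sinh_decomp (x y : ℝ) :
    Complex.sinh (x + y * Complex.I) =
      ((Real.sinh x * Real.cos y : ℝ) : ℂ) + ((Real.cosh x * Real.sin y : ℝ) : ℂ) * Complex.I := by
  rw [Complex.sinh_add, Complex.sinh_mul_I, Complex.cosh_mul_I]
  push_cast [← Complex.ofReal_sinh, ← Complex.ofReal_cosh, ← Complex.ofReal_sin,
    ← Complex.ofReal_cos]
  ring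

lemma abs_sinh_lower₁ (x y : ℝ) : |Real.sinh x| ≤ ‖Complex.sinh (x + y * Complex.I)‖ := by
  rw [sinh_decomp]
  refine le_of_pow_le_pow_left₀ two_ne_zero (norm_nonneg _) ?_
  rw [Complex.sq_norm, Complex.normSq_add_mul_I, _root_.sq_abs]
  nlinarith [Real.sin_sq_add_cos_sq y, Real.cosh_sq x, sq_nonneg (Real.sin y),
    sq_nonneg (Real.sinh x * Real.sin y)]

lemma abs_sinh_lower₂ (x y : ℝ) : |Real.sin y| ≤ ‖Complex.sinh (x + y * Complex.I)‖ := by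
  rw [sinh_decomp]
  refine le_of_pow_le_pow_left₀ two_ne_zero (norm_nonneg _) ?_
  rw [Complex.sq_norm, Complex.normSq_add_mul_I, _root_.sq_abs]
  nlinarith [Real.sin_sq_add_cos_sq y, Real.cosh_sq x, sq_nonneg (Real.sin y),
    sq_nonneg (Real.sinh x * Real.cos y), sq_nonneg (Real.sinh x * Real.sin y)]

lemma csinh_ne_zero {w : ℂ} (h0 : 0 < w.im) (hπ : w.im < Real.pi) : Complex.sinh w ≠ 0 := by
  intro h
  have h1 := abs_sinh_lower₂ w.re w.im
  rw [Complex.re_add_im, h] at h1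
  simp only [norm_zero] at h1
  have h2 := Real.sin_pos_of_pos_of_lt_pi h0 hπ
  rw [abs_of_pos h2] at h1
  linarith

lemma exp_quarter_le_sinh {x : ℝ} (hx : 1 ≤ x) : Real.exp x / 4 ≤ Real.sinh x := by
  rw [Real.sinh_eq]
  have h1 : Real.exp (-x) ≤ 1 := by
    rw [Real.exp_le_one_iff]; linarith
  have h2 : 2 ≤ Real.exp x := by nlinarith [Real.add_one_le_exp x]
  linarith

lemma integrable_exp_neg_mul_abs {δ : ℝ} (hδ : 0 < δ) :
    Integrable (fun t : ℝ => Real.exp (-δ * |t|)) := by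
  have hIoi : IntegrableOn (fun t : ℝ => Real.exp (-δ * |t|)) (Ioi 0) := by
    refine (exp_neg_integrableOn_Ioi 0 hδ).congr_fun (fun x hx => ?_) measurableSet_Ioi
    rw [abs_of_pos hx]
  have hIic : IntegrableOn (fun t : ℝ => Real.exp (-δ * |t|)) (Iic 0) := by
    rw [← Measure.map_neg_eq_self (volume : Measure ℝ)]
    have m : MeasurableEmbedding fun x : ℝ => -x := (Homeomorph.neg ℝ).measurableEmbedding
    rw [m.integrableOn_map_iff]
    simp_rw [Function.comp_def, abs_neg, neg_preimage, neg_Iic, neg_zero]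
    exact Iff.mpr integrableOn_Ici_iff_integrableOn_Ioi hIoi
  rw [← integrableOn_univ, ← Iic_union_Ioi (a := (0:ℝ))]
  exact hIic.union hIoi


lemma norm_qdl (b : ℝ) (z : ℂ) (t ε : ℝ) :
    ‖qdlIntegrand (b : ℂ) z ((t : ℂ) + (ε : ℂ) * Complex.I)‖ =
      Real.exp (2 * z.re * ε + 2 * z.im * t) /
        (‖Complex.sinh ((t * b : ℝ) + (ε * b : ℝ) * Complex.I)‖ *
         ‖Complex.sinh ((t / b : ℝ) + (ε / b : ℝ) * Complex.I)‖ *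
         ‖(t : ℂ) + (ε : ℂ) * Complex.I‖) := by
  have h1 : ((t : ℂ) + (ε : ℂ) * Complex.I) * (b : ℂ)
      = ((t * b : ℝ) : ℂ) + ((ε * b : ℝ) : ℂ) * Complex.I := by push_cast; ring
  have h2 : ((t : ℂ) + (ε : ℂ) * Complex.I) / (b : ℂ)
      = ((t / b : ℝ) : ℂ) + ((ε / b : ℝ) : ℂ) * Complex.I := by push_cast; ring
  have h3 : (-2 * Complex.I * z * ((t : ℂ) + (ε : ℂ) * Complex.I)).re
      = 2 * z.re * ε + 2 * z.im * t := by
    simp [Complex.mul_re, Complex.mul_im]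
  rw [qdlIntegrand, h1, h2, norm_div, norm_mul, norm_mul, Complex.norm_exp, h3]


lemma qdl_tail_bound (b : ℝ) (hb : 0 < b) (z : ℂ) {t ε : ℝ} (hε : 0 < ε)
    (ht : max b b⁻¹ ≤ |t|) :
    ‖qdlIntegrand (b : ℂ) z ((t : ℂ) + (ε : ℂ) * Complex.I)‖ ≤
      16 / ε * Real.exp (2 * z.re * ε) * Real.exp ((2 * |z.im| - (b + b⁻¹)) * |t|) := by
  have hb' : 0 < b⁻¹ := inv_pos.2 hb
  have hbt : b⁻¹ ≤ |t| := le_trans (le_max_right _ _) ht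
  have hbt' : b ≤ |t| := le_trans (le_max_left _ _) ht
  have h1 : 1 ≤ |t| * b := by
    rw [← inv_mul_cancel₀ hb.ne']
    exact mul_le_mul_of_nonneg_right hbt hb.le
  have h2 : 1 ≤ |t| / b := (one_le_div hb).2 hbt'
  have e1 : Real.sinh (|t| * b) ≤ |Real.sinh (t * b)| := by
    rw [Real.abs_sinh, abs_mul, abs_of_pos hb]
  have e2 : Real.sinh (|t| / b) ≤ |Real.sinh (t / b)| := by
    rw [Real.abs_sinh, abs_div, abs_of_pos hb]
  have s1 : Real.exp (|t| * b) / 4 ≤ ‖Complex.sinh ((t * b : ℝ) + (ε * b : ℝ) * Complex.I)‖ :=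
    le_trans (le_trans (exp_quarter_le_sinh h1) e1) (abs_sinh_lower₁ (t * b) (ε * b))
  have s2 : Real.exp (|t| / b) / 4 ≤ ‖Complex.sinh ((t / b : ℝ) + (ε / b : ℝ) * Complex.I)‖ :=
    le_trans (le_trans (exp_quarter_le_sinh h2) e2) (abs_sinh_lower₁ (t / b) (ε / b))
  have s3 : ε ≤ ‖(t : ℂ) + (ε : ℂ) * Complex.I‖ := by
    have := Complex.abs_im_le_norm ((t : ℂ) + (ε : ℂ) * Complex.I)
    simpa [abs_of_pos hε] using this
  rw [norm_qdl]
  have hA : Real.exp (2 * z.re * ε + 2 * z.im * t)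
      ≤ Real.exp (2 * z.re * ε + 2 * |z.im| * |t|) := by
    apply Real.exp_le_exp.2
    have : 2 * z.im * t ≤ 2 * |z.im| * |t| := by
      calc 2 * z.im * t ≤ |2 * z.im * t| := le_abs_self _
      _ = 2 * |z.im| * |t| := by rw [abs_mul, abs_mul]; simp
    linarith
  have hBpos : (0:ℝ) < Real.exp (|t| * b) / 4 * (Real.exp (|t| / b) / 4) * ε := by positivity
  calc Real.exp (2 * z.re * ε + 2 * z.im * t) /
        (‖Complex.sinh ((t * b : ℝ) + (ε * b : ℝ) * Complex.I)‖ *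
         ‖Complex.sinh ((t / b : ℝ) + (ε / b : ℝ) * Complex.I)‖ *
         ‖(t : ℂ) + (ε : ℂ) * Complex.I‖)
      ≤ Real.exp (2 * z.re * ε + 2 * |z.im| * |t|) /
          (Real.exp (|t| * b) / 4 * (Real.exp (|t| / b) / 4) * ε) := by
        apply div_le_div₀ (Real.exp_pos _).le hA hBpos
        exact mul_le_mul (mul_le_mul s1 s2 (by positivity) (norm_nonneg _)) s3
          hε.le (mul_nonneg (norm_nonneg _) (norm_nonneg _))
    _ = 16 / ε * Real.exp (2 * z.re * ε) * Real.exp ((2 * |z.im| - (b + b⁻¹)) * |t|) := by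
        rw [Real.exp_add]
        have h4 : (2 * |z.im| - (b + b⁻¹)) * |t| = 2 * |z.im| * |t| - (|t| * b + |t| / b) := by
          field_simp
        rw [h4, Real.exp_sub, Real.exp_add]
        have := Real.exp_pos (|t| * b); have := Real.exp_pos (|t| / b)
        field_simp
        ring


lemma qdl_den_ne_zero (b : ℝ) (hb : 0 < b) {w : ℂ} (h0 : 0 < w.im)
    (hlt : w.im < Real.pi * min b b⁻¹) :
    Complex.sinh (w * b) * Complex.sinh (w / b) * w ≠ 0 := by
  have hb' : 0 < b⁻¹ := inv_pos.2 hb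
  have him1 : (w * (b : ℂ)).im = w.im * b := by simp [Complex.mul_im]
  have him2 : (w / (b : ℂ)).im = w.im * b⁻¹ := by
    rw [div_eq_mul_inv, ← Complex.ofReal_inv]; simp [Complex.mul_im]
  have hπ := Real.pi_pos
  have k1 : Complex.sinh (w * b) ≠ 0 := by
    apply csinh_ne_zero (by rw [him1]; positivity)
    rw [him1]
    calc w.im * b < Real.pi * min b b⁻¹ * b := by
          exact mul_lt_mul_of_pos_right hlt hb
      _ ≤ Real.pi * b⁻¹ * b := by
          gcongr
          exact min_le_right _ _
      _ = Real.pi := by field_simp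
  have k2 : Complex.sinh (w / b) ≠ 0 := by
    apply csinh_ne_zero (by rw [him2]; positivity)
    rw [him2]
    calc w.im * b⁻¹ < Real.pi * min b b⁻¹ * b⁻¹ := mul_lt_mul_of_pos_right hlt hb'
      _ ≤ Real.pi * b * b⁻¹ := by
          gcongr
          exact min_le_left _ _
      _ = Real.pi := by field_simp
  have k3 : w ≠ 0 := by
    intro h; rw [h] at h0; simp at h0
  exact mul_ne_zero (mul_ne_zero k1 k2) k3

lemma qdl_diffOn (b : ℝ) (hb : 0 < b) (z : ℂ) :
    DifferentiableOn ℂ (qdlIntegrand (b : ℂ) z)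
      {w : ℂ | 0 < w.im ∧ w.im < Real.pi * min b b⁻¹} := by
  apply DifferentiableOn.div
  · exact ((differentiable_id.const_mul (-2 * Complex.I * z)).cexp).differentiableOn
  · exact (((differentiable_id.mul_const _).csinh.mul
      (differentiable_id.div_const _).csinh).mul differentiable_id).differentiableOn
  · exact fun w hw => qdl_den_ne_zero b hb hw.1 hw.2


lemma qdl_cont (b : ℝ) (hb : 0 < b) (z : ℂ) {ε : ℝ} (hε0 : 0 < ε)
    (hεlt : ε < Real.pi * min b b⁻¹) :
    Continuous (fun t : ℝ => qdlIntegrand (b : ℂ) z ((t : ℂ) + (ε : ℂ) * Complex.I)) := by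
  unfold qdlIntegrand
  apply Continuous.div
  · fun_prop
  · fun_prop
  · intro t
    apply qdl_den_ne_zero b hb (w := (t : ℂ) + (ε : ℂ) * Complex.I) <;> simp [hε0, hεlt]

lemma qdl_integrable (b : ℝ) (hb : 0 < b) (z : ℂ) (hz : |z.im| < (b + b⁻¹) / 2)
    {ε : ℝ} (hε0 : 0 < ε) (hεlt : ε < Real.pi * min b b⁻¹) :
    Integrable (fun t : ℝ => qdlIntegrand (b : ℂ) z ((t : ℂ) + (ε : ℂ) * Complex.I)) := by
  have hcont := qdl_cont b hb z hε0 hεlt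
  set δ : ℝ := b + b⁻¹ - 2 * |z.im| with hδdef
  have hδ : 0 < δ := by simp only [hδdef]; linarith
  set T : ℝ := max b b⁻¹ with hTdef
  have hT0 : 0 < T := lt_max_of_lt_left hb
  obtain ⟨M, hM⟩ := (isCompact_Icc (a := -T) (b := T)).exists_bound_of_continuousOn
    hcont.continuousOn
  have hM0 : 0 ≤ M := le_trans (norm_nonneg _) (hM 0 ⟨by linarith, by linarith⟩)
  set K : ℝ := max (M * Real.exp (δ * T)) (16 / ε * Real.exp (2 * z.re * ε)) with hKdef
  apply Integrable.mono' ((integrable_exp_neg_mul_abs hδ).const_mul K)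
    hcont.aestronglyMeasurable
  filter_upwards with t
  rcases le_total |t| T with h | h
  · have hMt : ‖qdlIntegrand (b : ℂ) z ((t : ℂ) + (ε : ℂ) * Complex.I)‖ ≤ M :=
      hM t ⟨by linarith [abs_le.1 h |>.1], by linarith [abs_le.1 h |>.2]⟩
    have h1 : (1:ℝ) ≤ Real.exp (δ * T) * Real.exp (-δ * |t|) := by
      rw [← Real.exp_add]
      apply Real.one_le_exp
      nlinarith [abs_nonneg t]
    calc ‖qdlIntegrand (b : ℂ) z ((t : ℂ) + (ε : ℂ) * Complex.I)‖ ≤ M := hMt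
      _ ≤ M * (Real.exp (δ * T) * Real.exp (-δ * |t|)) := le_mul_of_one_le_right hM0 h1
      _ = M * Real.exp (δ * T) * Real.exp (-δ * |t|) := by ring
      _ ≤ K * Real.exp (-δ * |t|) := by
          apply mul_le_mul_of_nonneg_right (le_max_left _ _) (Real.exp_pos _).le
  · have := qdl_tail_bound b hb z hε0 (le_trans le_rfl h : max b b⁻¹ ≤ |t|)
    calc ‖qdlIntegrand (b : ℂ) z ((t : ℂ) + (ε : ℂ) * Complex.I)‖
        ≤ 16 / ε * Real.exp (2 * z.re * ε) * Real.exp ((2 * |z.im| - (b + b⁻¹)) * |t|) := this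
      _ = 16 / ε * Real.exp (2 * z.re * ε) * Real.exp (-δ * |t|) := by
          congr 2; simp only [hδdef]; ring
      _ ≤ K * Real.exp (-δ * |t|) :=
          mul_le_mul_of_nonneg_right (le_max_right _ _) (Real.exp_pos _).le


lemma qdl_shift (b : ℝ) (hb : 0 < b) (z : ℂ) (hz : |z.im| < (b + b⁻¹) / 2)
    {ε₁ ε₂ : ℝ} (h1 : 0 < ε₁) (h12 : ε₁ ≤ ε₂) (h2 : ε₂ < Real.pi * min b b⁻¹) :
    (∫ t : ℝ, qdlIntegrand (b : ℂ) z ((t : ℂ) + (ε₁ : ℂ) * Complex.I)) =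
      ∫ t : ℝ, qdlIntegrand (b : ℂ) z ((t : ℂ) + (ε₂ : ℂ) * Complex.I) := by
  set f : ℂ → ℂ := qdlIntegrand (b : ℂ) z with hf
  have h1' : 0 < ε₂ := lt_of_lt_of_le h1 h12
  have h2' : ε₁ < Real.pi * min b b⁻¹ := lt_of_le_of_lt h12 h2
  set δ : ℝ := b + b⁻¹ - 2 * |z.im| with hδdef
  have hδ : 0 < δ := by simp only [hδdef]; linarith
  -- rectangle identity
  have rect : ∀ T : ℝ,
      (∫ x : ℝ in (-T)..T, f ((x : ℂ) + (ε₁ : ℂ) * Complex.I)) =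
        (∫ x : ℝ in (-T)..T, f ((x : ℂ) + (ε₂ : ℂ) * Complex.I)) +
        (Complex.I • (∫ y : ℝ in ε₁..ε₂, f (((-T : ℝ) : ℂ) + (y : ℂ) * Complex.I)) -
         Complex.I • (∫ y : ℝ in ε₁..ε₂, f ((T : ℂ) + (y : ℂ) * Complex.I))) := by
    intro T
    set z₀ : ℂ := ((-T : ℝ) : ℂ) + (ε₁ : ℂ) * Complex.I with hz₀
    set w₀ : ℂ := (T : ℂ) + (ε₂ : ℂ) * Complex.I with hw₀
    have e1 : z₀.re = -T := by simp [hz₀]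
    have e2 : z₀.im = ε₁ := by simp [hz₀]
    have e3 : w₀.re = T := by simp [hw₀]
    have e4 : w₀.im = ε₂ := by simp [hw₀]
    have H := integral_boundary_rect_eq_zero_of_differentiableOn f z₀ w₀ ?_
    · rw [e1, e2, e3, e4] at H
      linear_combination H
    · apply (qdl_diffOn b hb z).mono
      intro w hw
      rw [Complex.mem_reProdIm, e1, e2, e3, e4] at hw
      have hwim := hw.2
      rw [uIcc_of_le h12] at hwim
      exact ⟨lt_of_lt_of_le h1 hwim.1, lt_of_le_of_lt hwim.2 h2⟩
  -- vertical side bound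
  set C : ℝ := 16 / ε₁ * Real.exp (2 * |z.re| * ε₂) with hC
  have hside : ∀ T : ℝ, max b b⁻¹ ≤ T → ∀ s : ℝ, |s| = T →
      ‖∫ y : ℝ in ε₁..ε₂, f ((s : ℂ) + (y : ℂ) * Complex.I)‖ ≤
        C * Real.exp (-δ * T) * |ε₂ - ε₁| := by
    intro T hT s hs
    apply intervalIntegral.norm_integral_le_of_norm_le_const
    intro y hy
    rw [uIoc_of_le h12] at hy
    have hy1 : ε₁ < y := hy.1
    have hy2 : y ≤ ε₂ := hy.2
    have hy0 : 0 < y := lt_trans h1 hy1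
    have := qdl_tail_bound b hb z hy0 (by rw [hs]; exact hT)
    refine le_trans this ?_
    rw [hs]
    have hexp1 : Real.exp (2 * z.re * y) ≤ Real.exp (2 * |z.re| * ε₂) := by
      apply Real.exp_le_exp.2
      calc 2 * z.re * y ≤ 2 * |z.re| * y := by
            apply mul_le_mul_of_nonneg_right _ hy0.le
            have := le_abs_self z.re; linarith
        _ ≤ 2 * |z.re| * ε₂ := by
            apply mul_le_mul_of_nonneg_left hy2 (by positivity)
    have hdiv : 16 / y ≤ 16 / ε₁ := by
      apply div_le_div_of_nonneg_left (by norm_num) h1 hy1.le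
    have heq : (2 * |z.im| - (b + b⁻¹)) * T = -δ * T := by
      simp only [hδdef]; ring
    rw [heq, hC]
    calc 16 / y * Real.exp (2 * z.re * y) * Real.exp (-δ * T)
        ≤ 16 / ε₁ * Real.exp (2 * |z.re| * ε₂) * Real.exp (-δ * T) := by
          apply mul_le_mul_of_nonneg_right _ (Real.exp_pos _).le
          exact mul_le_mul hdiv hexp1 (Real.exp_pos _).le (by positivity)
      _ = 16 / ε₁ * Real.exp (2 * |z.re| * ε₂) * Real.exp (-δ * T) := rfl
  -- vertical integrals tend to 0
  have hexp0 : Tendsto (fun T : ℝ => Real.exp (-δ * T)) atTop (𝓝 0) := by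
    have hcomp : Tendsto (fun T : ℝ => -δ * T) atTop atBot := by
      have : Tendsto (fun T : ℝ => δ * T) atTop atTop :=
        (tendsto_const_mul_atTop_of_pos hδ).mpr tendsto_id
      simpa only [Function.comp_def, neg_mul] using tendsto_neg_atTop_atBot.comp this
    exact Real.tendsto_exp_atBot.comp hcomp
  have hvert : Tendsto (fun T : ℝ =>
      Complex.I • (∫ y : ℝ in ε₁..ε₂, f (((-T : ℝ) : ℂ) + (y : ℂ) * Complex.I)) -
      Complex.I • (∫ y : ℝ in ε₁..ε₂, f ((T : ℂ) + (y : ℂ) * Complex.I)))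
      atTop (𝓝 0) := by
    rw [tendsto_zero_iff_norm_tendsto_zero]
    have hbound : Tendsto (fun T : ℝ => 2 * (C * Real.exp (-δ * T) * |ε₂ - ε₁|))
        atTop (𝓝 0) := by
      have := ((hexp0.const_mul C).mul_const (|ε₂ - ε₁|)).const_mul 2
      simpa using this
    refine tendsto_of_tendsto_of_tendsto_of_le_of_le' tendsto_const_nhds hbound
      (Eventually.of_forall fun T => norm_nonneg _) ?_
    filter_upwards [eventually_ge_atTop (max b b⁻¹), eventually_ge_atTop (0 : ℝ)] with T hT hT0
    have hA := hside T hT T (abs_of_nonneg hT0)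
    have hB := hside T hT (-T) (by rw [abs_neg]; exact abs_of_nonneg hT0)
    calc ‖Complex.I • (∫ y : ℝ in ε₁..ε₂, f (((-T : ℝ) : ℂ) + (y : ℂ) * Complex.I)) -
          Complex.I • (∫ y : ℝ in ε₁..ε₂, f ((T : ℂ) + (y : ℂ) * Complex.I))‖
        ≤ ‖Complex.I • (∫ y : ℝ in ε₁..ε₂, f (((-T : ℝ) : ℂ) + (y : ℂ) * Complex.I))‖ +
          ‖Complex.I • (∫ y : ℝ in ε₁..ε₂, f ((T : ℂ) + (y : ℂ) * Complex.I))‖ :=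
          norm_sub_le _ _
      _ ≤ C * Real.exp (-δ * T) * |ε₂ - ε₁| + C * Real.exp (-δ * T) * |ε₂ - ε₁| := by
          rw [norm_smul, norm_smul, Complex.norm_I, one_mul, one_mul]
          exact add_le_add hB hA
      _ = 2 * (C * Real.exp (-δ * T) * |ε₂ - ε₁|) := by ring
  -- combine
  have hi1 := qdl_integrable b hb z hz h1 h2'
  have hi2 := qdl_integrable b hb z hz h1' h2
  have HA : Tendsto (fun T : ℝ => ∫ x : ℝ in (-T)..T, f ((x : ℂ) + (ε₁ : ℂ) * Complex.I))
      atTop (𝓝 (∫ t : ℝ, f ((t : ℂ) + (ε₁ : ℂ) * Complex.I))) :=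
    intervalIntegral_tendsto_integral hi1 tendsto_neg_atTop_atBot tendsto_id
  have HB : Tendsto (fun T : ℝ => ∫ x : ℝ in (-T)..T, f ((x : ℂ) + (ε₂ : ℂ) * Complex.I))
      atTop (𝓝 (∫ t : ℝ, f ((t : ℂ) + (ε₂ : ℂ) * Complex.I))) :=
    intervalIntegral_tendsto_integral hi2 tendsto_neg_atTop_atBot tendsto_id
  have HA' : Tendsto (fun T : ℝ => ∫ x : ℝ in (-T)..T, f ((x : ℂ) + (ε₁ : ℂ) * Complex.I))
      atTop (𝓝 ((∫ t : ℝ, f ((t : ℂ) + (ε₂ : ℂ) * Complex.I)) + 0)) := by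
    have := HB.add hvert
    refine Tendsto.congr (fun T => (rect T).symm) this
  have := tendsto_nhds_unique HA HA'
  rw [this, add_zero]

/-- For every real `b > 0`, the integrand `w ↦ e^{-2izw}/(sinh(wb) sinh(w/b) w)` is
integrable along each horizontal line `ℝ + iε` with `0 < ε < π min(b, b⁻¹)`, for every
complex `z` with `|Im z| < (b + b⁻¹)/2`, and the value of the contour integral does not
depend on the choice of such `ε`. -/
theorem qdl_integrand_integrable_and_integral_indep_of_eps
    (b : ℝ) (hb : 0 < b) (z : ℂ) (hz : |z.im| < (b + b⁻¹) / 2) :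
    (∀ ε : ℝ, 0 < ε → ε < Real.pi * min b b⁻¹ →
      Integrable (fun t : ℝ => qdlIntegrand (b : ℂ) z ((t : ℂ) + (ε : ℂ) * Complex.I))) ∧
    (∀ ε₁ ε₂ : ℝ, 0 < ε₁ → ε₁ < Real.pi * min b b⁻¹ → 0 < ε₂ → ε₂ < Real.pi * min b b⁻¹ →
      (∫ t : ℝ, qdlIntegrand (b : ℂ) z ((t : ℂ) + (ε₁ : ℂ) * Complex.I)) =
      ∫ t : ℝ, qdlIntegrand (b : ℂ) z ((t : ℂ) + (ε₂ : ℂ) * Complex.I)) := by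
  constructor
  · exact fun ε hε0 hεlt => qdl_integrable b hb z hz hε0 hεlt
  · intro ε₁ ε₂ h10 h1lt h20 h2lt
    rcases le_total ε₁ ε₂ with h | h
    · exact qdl_shift b hb z hz h10 h h2lt
    · exact (qdl_shift b hb z hz h20 h h1lt).symm
end
end

section
/- For every real b > 0, the non-compact quantum dilogarithm z ↦ e_b(z) is holomorphic on the open strip {z ∈ ℂ : |Im z| < (b + b^{-1})/2} and is nonvanishing at every point of this strip. -/
noncomputable section
open Complex MeasureTheory Filter Topology

/-- The non-compact quantum dilogarithm `e_b(z)`, defined by the contour integral over the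
horizontal line `ℝ + iε`, with the canonical choice `ε = (π/2) * min (Re b) (Re b⁻¹)`
(for real `b > 0` this is `(π/2) * min b b⁻¹`, which lies in `(0, π min(b,b⁻¹))`; the
integral is independent of the choice of admissible `ε`). -/
def qdl (b z : ℂ) : ℂ :=
  Complex.exp ((1 / 4) *
    ∫ t : ℝ, qdlIntegrand b z ((t : ℂ) + ((Real.pi / 2 * min b.re (1 / b).re : ℝ) : ℂ) * Complex.I))

namespace QdlAux

open Set Real

lemma integrable_exp_neg_abs {a : ℝ} (ha : 0 < a) :
    Integrable (fun t : ℝ => Real.exp (-(a*|t|))) := by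
  have h1 : IntegrableOn (fun t : ℝ => Real.exp (-(a*|t|))) (Ici 0) := by
    rw [integrableOn_Ici_iff_integrableOn_Ioi]
    exact (exp_neg_integrableOn_Ioi 0 ha).congr_fun
      (fun t ht => by simp [abs_of_pos (mem_Ioi.1 ht)]) measurableSet_Ioi
  have h2 : IntegrableOn (fun t : ℝ => Real.exp (-(a*|t|))) (Iic 0) := by
    have := (MeasurePreserving.integrableOn_comp_preimage
      (Measure.measurePreserving_neg (volume : Measure ℝ))
      (Homeomorph.neg ℝ).measurableEmbedding).2 h1
    simp only [Function.comp_def] at this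
    rw [show ((fun x : ℝ => -x) ⁻¹' Ici 0) = Iic 0 by ext x; simp] at this
    exact this.congr_fun (fun t _ => by simp) measurableSet_Iic
  have h4 : IntegrableOn (fun t : ℝ => Real.exp (-(a*|t|))) (Iic 0 ∪ Ici 0) := h2.union h1
  rwa [Iic_union_Ici, integrableOn_univ] at h4

lemma sinh_mk (x y : ℝ) :
    Complex.sinh (x + y * Complex.I) =
      ((Real.sinh x * Real.cos y : ℝ) : ℂ) + ((Real.cosh x * Real.sin y : ℝ) : ℂ) * Complex.I := by
  rw [Complex.sinh_add, Complex.sinh_mul_I, Complex.cosh_mul_I]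
  push_cast
  ring

lemma abs_sinh_sq (x y : ℝ) :
    ‖Complex.sinh (x + y * Complex.I)‖ ^ 2 = Real.sinh x ^ 2 + Real.sin y ^ 2 := by
  rw [sinh_mk, Complex.sq_norm, Complex.normSq_add_mul_I]
  have h1 := Real.sin_sq_add_cos_sq y
  have h2 := Real.cosh_sq x
  nlinarith [Real.sinh_sq x]

lemma sinh_lower_sinh (x y : ℝ) :
    Real.sinh |x| ≤ ‖Complex.sinh (x + y * Complex.I)‖ := by
  have h : (Real.sinh |x|) ^ 2 ≤ ‖Complex.sinh (x + y * Complex.I)‖ ^ 2 := by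
    rw [abs_sinh_sq, ← Real.abs_sinh, _root_.sq_abs]
    nlinarith [sq_nonneg (Real.sin y)]
  have h0 : 0 ≤ Real.sinh |x| := Real.sinh_nonneg_iff.2 (abs_nonneg x)
  nlinarith [norm_nonneg (Complex.sinh (x + y * Complex.I))]

lemma sinh_lower_sin (x y : ℝ) :
    |Real.sin y| ≤ ‖Complex.sinh (x + y * Complex.I)‖ := by
  have h : |Real.sin y| ^ 2 ≤ ‖Complex.sinh (x + y * Complex.I)‖ ^ 2 := by
    rw [abs_sinh_sq, _root_.sq_abs]
    nlinarith [sq_nonneg (Real.sinh x)]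
  nlinarith [norm_nonneg (Complex.sinh (x + y * Complex.I)), abs_nonneg (Real.sin y)]

lemma sinh_ne_zero (x y : ℝ) (hy : 0 < Real.sin y) :
    Complex.sinh (x + y * Complex.I) ≠ 0 := by
  have h := sinh_lower_sin x y
  intro h0
  rw [h0] at h
  simp only [norm_zero] at h
  have : |Real.sin y| > 0 := abs_pos.2 hy.ne'
  linarith

lemma sinh_abs_lower (x y : ℝ) :
    min (4⁻¹ : ℝ) (|Real.sin y| / Real.exp 1) * Real.exp |x| ≤
      ‖Complex.sinh (x + y * Complex.I)‖ := by
  rcases le_or_gt |x| 1 with h | h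
  · calc min (4⁻¹ : ℝ) (|Real.sin y| / Real.exp 1) * Real.exp |x|
        ≤ (|Real.sin y| / Real.exp 1) * Real.exp |x| :=
          mul_le_mul_of_nonneg_right (min_le_right _ _) (Real.exp_pos _).le
      _ ≤ (|Real.sin y| / Real.exp 1) * Real.exp 1 :=
          mul_le_mul_of_nonneg_left (Real.exp_le_exp.2 h) (by positivity)
      _ = |Real.sin y| := div_mul_cancel₀ _ (Real.exp_ne_zero 1)
      _ ≤ _ := sinh_lower_sin x y
  · calc min (4⁻¹ : ℝ) (|Real.sin y| / Real.exp 1) * Real.exp |x|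
        ≤ 4⁻¹ * Real.exp |x| := by
          apply mul_le_mul_of_nonneg_right (min_le_left _ _) (Real.exp_pos _).le
      _ ≤ Real.sinh |x| := by
          rw [Real.sinh_eq]
          have h1 : Real.exp (-|x|) ≤ 1 := Real.exp_le_one_iff.2 (neg_nonpos.2 (abs_nonneg x))
          have h2 : Real.exp 1 ≤ Real.exp |x| := Real.exp_le_exp.2 h.le
          have h3 : (2:ℝ) ≤ Real.exp 1 := by
            have := Real.add_one_le_exp (1:ℝ); linarith
          linarith
      _ ≤ _ := sinh_lower_sinh x y

end QdlAux

set_option maxHeartbeats 1000000 in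
/-- For every real `b > 0`, the non-compact quantum dilogarithm `z ↦ e_b(z)` is holomorphic
on the open strip `{z : |Im z| < (b + b⁻¹)/2}` and nonvanishing at every point of it. -/
theorem qdl_differentiableOn_strip_and_ne_zero (b : ℝ) (hb : 0 < b) :
    DifferentiableOn ℂ (qdl (b : ℂ)) {z : ℂ | |z.im| < (b + b⁻¹) / 2} ∧
    ∀ z ∈ {z : ℂ | |z.im| < (b + b⁻¹) / 2}, qdl (b : ℂ) z ≠ 0 := by
  have hb' : (0:ℝ) < b⁻¹ := inv_pos.2 hb
  set ε : ℝ := Real.pi / 2 * min b b⁻¹ with hεdef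
  have hmin : 0 < min b b⁻¹ := lt_min hb hb'
  have hπ : (0:ℝ) < Real.pi := Real.pi_pos
  have hε : 0 < ε := mul_pos (by positivity) hmin
  have hεb : 0 < ε * b := mul_pos hε hb
  have hεb' : 0 < ε * b⁻¹ := mul_pos hε hb'
  have hεble : ε * b ≤ Real.pi / 2 := by
    have h1 : min b b⁻¹ * b ≤ 1 := by
      calc min b b⁻¹ * b ≤ b⁻¹ * b := mul_le_mul_of_nonneg_right (min_le_right _ _) hb.le
        _ = 1 := inv_mul_cancel₀ hb.ne'
    calc ε * b = Real.pi/2 * (min b b⁻¹ * b) := by rw [hεdef]; ring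
      _ ≤ Real.pi/2 * 1 := mul_le_mul_of_nonneg_left h1 (by positivity)
      _ = Real.pi/2 := mul_one _
  have hεb'le : ε * b⁻¹ ≤ Real.pi / 2 := by
    have h1 : min b b⁻¹ * b⁻¹ ≤ 1 := by
      calc min b b⁻¹ * b⁻¹ ≤ b * b⁻¹ := mul_le_mul_of_nonneg_right (min_le_left _ _) hb'.le
        _ = 1 := mul_inv_cancel₀ hb.ne'
    calc ε * b⁻¹ = Real.pi/2 * (min b b⁻¹ * b⁻¹) := by rw [hεdef]; ring
      _ ≤ Real.pi/2 * 1 := mul_le_mul_of_nonneg_left h1 (by positivity)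
      _ = Real.pi/2 := mul_one _
  have hs₁ : 0 < Real.sin (ε*b) :=
    Real.sin_pos_of_pos_of_lt_pi hεb (lt_of_le_of_lt hεble (by linarith))
  have hs₂ : 0 < Real.sin (ε*b⁻¹) :=
    Real.sin_pos_of_pos_of_lt_pi hεb' (lt_of_le_of_lt hεb'le (by linarith))
  set c₁ : ℝ := min (4⁻¹ : ℝ) (|Real.sin (ε*b)| / Real.exp 1) with hc₁def
  set c₂ : ℝ := min (4⁻¹ : ℝ) (|Real.sin (ε*b⁻¹)| / Real.exp 1) with hc₂def
  have hc₁ : 0 < c₁ := lt_min (by norm_num) (div_pos (abs_pos.2 hs₁.ne') (Real.exp_pos 1))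
  have hc₂ : 0 < c₂ := lt_min (by norm_num) (div_pos (abs_pos.2 hs₂.ne') (Real.exp_pos 1))
  -- the shifted contour point
  set w : ℝ → ℂ := fun t => (t:ℂ) + (ε:ℝ) * Complex.I with hwdef
  have hqdl : qdl (b:ℂ) = fun z => Complex.exp ((1/4 : ℂ) * ∫ t : ℝ, qdlIntegrand b z (w t)) := by
    funext z
    have hre : (Real.pi / 2 * min ((b:ℂ)).re (1/(b:ℂ)).re : ℝ) = ε := by
      have h1 : ((b:ℂ)).re = b := Complex.ofReal_re b
      have h2 : (1/(b:ℂ)).re = b⁻¹ := by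
        rw [show (1/(b:ℂ)) = ((b⁻¹ : ℝ) : ℂ) by push_cast; ring, Complex.ofReal_re]
      rw [hεdef, h1, h2]
    rw [qdl, hre]
  have hwb : ∀ t : ℝ, w t * b = ((t*b : ℝ):ℂ) + ((ε*b:ℝ):ℂ)*Complex.I := by
    intro t; rw [hwdef]; push_cast; ring
  have hwb' : ∀ t : ℝ, w t / b = ((t*b⁻¹ : ℝ):ℂ) + ((ε*b⁻¹:ℝ):ℂ)*Complex.I := by
    intro t; rw [hwdef, div_eq_mul_inv]; push_cast; ring
  have hw0 : ∀ t : ℝ, w t ≠ 0 := by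
    intro t h
    have h2 : (w t).im = ε := by rw [hwdef]; simp
    rw [h] at h2
    simp only [Complex.zero_im] at h2
    exact hε.ne h2
  have hsinh1 : ∀ t : ℝ, Complex.sinh (w t * b) ≠ 0 := by
    intro t; rw [hwb t]; exact QdlAux.sinh_ne_zero _ _ hs₁
  have hsinh2 : ∀ t : ℝ, Complex.sinh (w t / b) ≠ 0 := by
    intro t; rw [hwb' t]; exact QdlAux.sinh_ne_zero _ _ hs₂
  have hD : ∀ t : ℝ, Complex.sinh (w t * b) * Complex.sinh (w t / b) * w t ≠ 0 := by
    intro t; exact mul_ne_zero (mul_ne_zero (hsinh1 t) (hsinh2 t)) (hw0 t)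
  have hwcont : Continuous w := by
    rw [hwdef]; exact Complex.continuous_ofReal.add continuous_const
  -- continuity in t of the integrand, for fixed z
  have hcont : ∀ z : ℂ, Continuous fun t : ℝ => qdlIntegrand b z (w t) := by
    intro z
    unfold qdlIntegrand
    exact Continuous.div
      (Complex.continuous_exp.comp (by fun_prop))
      (by fun_prop)
      hD
  -- the core estimate
  set K0 : ℝ → ℝ := fun R => Real.exp (2*R*ε) / (ε * c₁ * c₂) with hK0def
  have key : ∀ (δ R : ℝ), 0 ≤ δ → ∀ z : ℂ, |z.im| ≤ δ → |z.re| ≤ R → ∀ t : ℝ,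
      ‖qdlIntegrand b z (w t)‖ ≤ K0 R * Real.exp (-(((b+b⁻¹) - 2*δ) * |t|)) := by
    intro δ R hδ z hz1 hz2 t
    have hnum : ‖Complex.exp (-2 * Complex.I * z * w t)‖ ≤
        Real.exp (2*R*ε + 2*δ*|t|) := by
      rw [Complex.norm_exp]
      apply Real.exp_le_exp.2
      have hre : (-2 * Complex.I * z * w t).re = 2*(z.re*ε + z.im*t) := by
        rw [hwdef]
        simp [Complex.mul_re, Complex.mul_im]
        ring
      rw [hre]
      have h1 : z.re * ε ≤ R * ε :=
        mul_le_mul_of_nonneg_right ((le_abs_self _).trans hz2) hε.le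
      have h2 : z.im * t ≤ δ * |t| := by
        calc z.im * t ≤ |z.im * t| := le_abs_self _
          _ = |z.im| * |t| := abs_mul _ _
          _ ≤ δ * |t| := mul_le_mul_of_nonneg_right hz1 (abs_nonneg t)
      linarith
    have hA1 : c₁ * Real.exp (b*|t|) ≤ ‖Complex.sinh (w t * b)‖ := by
      rw [hwb t]
      have := QdlAux.sinh_abs_lower (t*b) (ε*b)
      rwa [abs_mul, abs_of_pos hb, mul_comm |t| b] at this
    have hA2 : c₂ * Real.exp (b⁻¹*|t|) ≤ ‖Complex.sinh (w t / b)‖ := by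
      rw [hwb' t]
      have := QdlAux.sinh_abs_lower (t*b⁻¹) (ε*b⁻¹)
      rwa [abs_mul, abs_of_pos hb', mul_comm |t| b⁻¹] at this
    have hA3 : ε ≤ ‖w t‖ := by
      have h1 : |(w t).im| ≤ ‖w t‖ := Complex.abs_im_le_norm _
      have h2 : (w t).im = ε := by rw [hwdef]; simp
      rwa [h2, abs_of_pos hε] at h1
    have hden : (c₁ * Real.exp (b*|t|)) * (c₂ * Real.exp (b⁻¹*|t|)) * ε ≤
        ‖Complex.sinh (w t * b) * Complex.sinh (w t / b) * w t‖ := by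
      rw [norm_mul, norm_mul]
      apply mul_le_mul (mul_le_mul hA1 hA2 (by positivity) (norm_nonneg _)) hA3 hε.le
      positivity
    have hdenpos : 0 < (c₁ * Real.exp (b*|t|)) * (c₂ * Real.exp (b⁻¹*|t|)) * ε := by positivity
    calc ‖qdlIntegrand b z (w t)‖
        = ‖Complex.exp (-2 * Complex.I * z * w t)‖ /
            ‖Complex.sinh (w t * b) * Complex.sinh (w t / b) * w t‖ := by
          rw [qdlIntegrand, norm_div]
      _ ≤ Real.exp (2*R*ε + 2*δ*|t|) /
            ((c₁ * Real.exp (b*|t|)) * (c₂ * Real.exp (b⁻¹*|t|)) * ε) :=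
          div_le_div₀ (Real.exp_pos _).le hnum hdenpos hden
      _ = K0 R * Real.exp (-(((b+b⁻¹) - 2*δ) * |t|)) := by
          rw [hK0def]
          rw [Real.exp_add]
          rw [show Real.exp (-(((b+b⁻¹) - 2*δ) * |t|)) =
            Real.exp (2*δ*|t|) / (Real.exp (b*|t|) * Real.exp (b⁻¹*|t|)) by
              rw [← Real.exp_add, ← Real.exp_sub]; congr 1; ring]
          field_simp
  -- nonvanishing is immediate
  refine ⟨?_, fun z _ => by rw [qdl]; exact Complex.exp_ne_zero _⟩
  -- differentiability
  intro z₀ hz₀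
  simp only [Set.mem_setOf_eq] at hz₀
  set r : ℝ := ((b+b⁻¹)/2 - |z₀.im|)/2 with hrdef
  have hr : 0 < r := by rw [hrdef]; linarith
  set δ : ℝ := |z₀.im| + r with hδdef
  set R : ℝ := |z₀.re| + r with hRdef
  set a : ℝ := (b+b⁻¹) - 2*δ with hadef
  have ha : 0 < a := by rw [hadef, hδdef, hrdef]; linarith
  have hδ0 : 0 ≤ δ := by positivity
  have hball : ∀ z ∈ Metric.ball z₀ r, |z.im| ≤ δ ∧ |z.re| ≤ R := by
    intro z hz
    rw [Metric.mem_ball, Complex.dist_eq] at hz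
    constructor
    · calc |z.im| = |z₀.im + (z - z₀).im| := by rw [Complex.sub_im]; ring_nf
        _ ≤ |z₀.im| + |(z - z₀).im| := abs_add_le _ _
        _ ≤ |z₀.im| + ‖z - z₀‖ := by
            linarith [Complex.abs_im_le_norm (z - z₀)]
        _ ≤ δ := by rw [hδdef]; linarith
    · calc |z.re| = |z₀.re + (z - z₀).re| := by rw [Complex.sub_re]; ring_nf
        _ ≤ |z₀.re| + |(z - z₀).re| := abs_add_le _ _
        _ ≤ |z₀.re| + ‖z - z₀‖ := by
            linarith [Complex.abs_re_le_norm (z - z₀)]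
        _ ≤ R := by rw [hRdef]; linarith
  -- the derivative in z of the integrand
  set D : ℝ → ℂ := fun t => Complex.sinh (w t * b) * Complex.sinh (w t / b) * w t with hDdef
  set F' : ℂ → ℝ → ℂ := fun z t =>
    Complex.exp (-2*Complex.I*(w t)*z) * (-2*Complex.I*(w t)) / D t with hF'def
  have hfun : ∀ t : ℝ, (fun z => qdlIntegrand b z (w t)) =
      fun z => Complex.exp (-2*Complex.I*(w t)*z) / D t := by
    intro t; funext z
    simp only [qdlIntegrand, hDdef]
    congr 2
    ring
  have hF'eq : ∀ z t, F' z t = qdlIntegrand b z (w t) * (-2*Complex.I*(w t)) := by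
    intro z t
    simp only [hF'def, hDdef, qdlIntegrand]
    rw [div_mul_eq_mul_div]
    congr 2
    ring
  have h_diff : ∀ t : ℝ, ∀ z ∈ Metric.ball z₀ r,
      HasDerivAt (fun z => qdlIntegrand b z (w t)) (F' z t) z := by
    intro t z _
    have h0 : HasDerivAt (fun z:ℂ => -2*Complex.I*(w t)*z) (-2*Complex.I*(w t)) z := by
      simpa using (hasDerivAt_id z).const_mul (-2*Complex.I*(w t))
    have h1 := (h0.cexp).div_const (D t)
    rw [hfun t]
    exact h1
  set bound : ℝ → ℝ := fun t => 2*(2/a + ε) * K0 R * Real.exp (-(a/2*|t|)) with hbounddef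
  have hwabs : ∀ t : ℝ, ‖w t‖ ≤ |t| + ε := by
    intro t
    rw [hwdef]
    calc ‖(t:ℂ) + (ε:ℝ) * Complex.I‖ ≤
        ‖(t:ℂ)‖ + ‖(ε:ℝ) * Complex.I‖ := norm_add_le _ _
      _ = |t| + ε := by
          rw [norm_mul, Complex.norm_I, Complex.norm_real, Complex.norm_real, Real.norm_eq_abs, Real.norm_eq_abs, mul_one,
            abs_of_pos hε]
  have hK0pos : 0 < K0 R := by rw [hK0def]; positivity
  have h_bound : ∀ t : ℝ, ∀ z ∈ Metric.ball z₀ r, ‖F' z t‖ ≤ bound t := by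
    intro t z hz
    obtain ⟨hz1, hz2⟩ := hball z hz
    have hkey := key δ R hδ0 z hz1 hz2 t
    have hxe : |t| + ε ≤ (2/a + ε) * Real.exp (a/2*|t|) := by
      have h1 := Real.add_one_le_exp (a/2*|t|)
      have h3 : 1 ≤ Real.exp (a/2*|t|) := Real.one_le_exp (by positivity)
      have h4 : |t| ≤ 2/a * Real.exp (a/2*|t|) := by
        rw [div_mul_eq_mul_div, le_div_iff₀ ha]
        nlinarith [abs_nonneg t]
      nlinarith [mul_le_mul_of_nonneg_left h3 hε.le]
    have hmid : (|t|+ε) * Real.exp (-(a*|t|)) ≤ (2/a+ε) * Real.exp (-(a/2*|t|)) := by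
      have hsplit : Real.exp (-(a*|t|)) = Real.exp (-(a/2*|t|)) * Real.exp (-(a/2*|t|)) := by
        rw [← Real.exp_add]; congr 1; ring
      rw [hsplit, ← mul_assoc]
      apply mul_le_mul_of_nonneg_right _ (Real.exp_pos _).le
      calc (|t|+ε) * Real.exp (-(a/2*|t|)) ≤
          ((2/a+ε) * Real.exp (a/2*|t|)) * Real.exp (-(a/2*|t|)) :=
            mul_le_mul_of_nonneg_right hxe (Real.exp_pos _).le
        _ = 2/a+ε := by rw [mul_assoc, ← Real.exp_add]; simp
    calc ‖F' z t‖ = ‖qdlIntegrand b z (w t)‖ * (2 * ‖w t‖) := by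
          rw [hF'eq, norm_mul]
          congr 1
          rw [norm_mul, norm_mul]
          simp [Complex.norm_I]
      _ ≤ (K0 R * Real.exp (-(a*|t|))) * (2 * (|t| + ε)) := by
          apply mul_le_mul hkey _ (by positivity) (by positivity)
          · exact mul_le_mul_of_nonneg_left (hwabs t) (by norm_num)
      _ = 2 * K0 R * ((|t|+ε) * Real.exp (-(a*|t|))) := by ring
      _ ≤ 2 * K0 R * ((2/a+ε) * Real.exp (-(a/2*|t|))) :=
          mul_le_mul_of_nonneg_left hmid (by positivity)
      _ = bound t := by rw [hbounddef]; ring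
  have hbound_int : Integrable bound := by
    rw [hbounddef]
    exact (QdlAux.integrable_exp_neg_abs (by positivity : (0:ℝ) < a/2)).const_mul _
  have hF_int : Integrable (fun t => qdlIntegrand b z₀ (w t)) := by
    apply Integrable.mono' ((QdlAux.integrable_exp_neg_abs ha).const_mul (K0 R))
      (hcont z₀).aestronglyMeasurable
    apply Eventually.of_forall
    intro t
    exact key δ R hδ0 z₀ (by rw [hδdef]; linarith [le_abs_self z₀.im, hr]) (by rw [hRdef]; linarith [hr]) t
  have hF'cont : Continuous (F' z₀) := by
    rw [hF'def]
    exact Continuous.div (by fun_prop) (by rw [hDdef]; fun_prop) hD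
  obtain ⟨-, hderiv⟩ := hasDerivAt_integral_of_dominated_loc_of_deriv_le (Metric.ball_mem_nhds z₀ hr)
    (Eventually.of_forall fun z => (hcont z).aestronglyMeasurable)
    hF_int hF'cont.aestronglyMeasurable
    (Eventually.of_forall fun t z hz => h_bound t z hz)
    hbound_int
    (Eventually.of_forall fun t z hz => h_diff t z hz)
  rw [hqdl]
  exact ((hderiv.const_mul ((1:ℂ)/4)).cexp).differentiableAt.differentiableWithinAt
end
end

section
/- Let b be a complex number with Re b > 0 which is either real or of modulus one. Then for every z in the strip |Im z| < Im c_b (so that z̄ also lies in the strip), the unitarity relation conj(e_b(z)) = 1 / e_b(z̄) holds; in particular, for b real and x real, |e_b(x)| = 1. -/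
noncomputable section
open Complex MeasureTheory Filter Topology

private lemma qdl_conj_integrand (b : ℂ)
    (hcb : (starRingEnd ℂ) b = b ∨ (starRingEnd ℂ) b = b⁻¹) (z : ℂ) (ε t : ℝ) :
    (starRingEnd ℂ) (qdlIntegrand b z ((t : ℂ) + (ε : ℂ) * Complex.I)) =
      - qdlIntegrand b ((starRingEnd ℂ) z) ((-t : ℂ) + (ε : ℂ) * Complex.I) := by
  have hw : (starRingEnd ℂ) ((t : ℂ) + (ε : ℂ) * Complex.I)
      = -((-t : ℂ) + (ε : ℂ) * Complex.I) := by
    simp [Complex.conj_I]; ring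
  set w' : ℂ := (-t : ℂ) + (ε : ℂ) * Complex.I with hw'
  unfold qdlIntegrand
  have hA : (starRingEnd ℂ) (-2 * Complex.I * z * ((t : ℂ) + (ε : ℂ) * Complex.I))
      = -2 * Complex.I * ((starRingEnd ℂ) z) * w' := by
    rw [map_mul, map_mul, map_mul, hw, Complex.conj_I]
    simp only [map_neg, map_ofNat]
    ring
  rcases hcb with h | h
  · have h1 : (starRingEnd ℂ) (((t : ℂ) + (ε : ℂ) * Complex.I) * b) = -(w' * b) := by
      rw [map_mul, hw, h]; ring
    have h2 : (starRingEnd ℂ) (((t : ℂ) + (ε : ℂ) * Complex.I) / b) = -(w' / b) := by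
      rw [map_div₀, hw, h]; ring
    rw [map_div₀, map_mul, map_mul, ← Complex.exp_conj, ← Complex.sinh_conj,
      ← Complex.sinh_conj, hA, h1, h2, hw, Complex.sinh_neg, Complex.sinh_neg,
      show (-Complex.sinh (w' * b)) * (-Complex.sinh (w' / b)) * (-w')
        = -(Complex.sinh (w' * b) * Complex.sinh (w' / b) * w') by ring, div_neg]
  · have h1 : (starRingEnd ℂ) (((t : ℂ) + (ε : ℂ) * Complex.I) * b) = -(w' / b) := by
      rw [map_mul, hw, h, div_eq_mul_inv]; ring
    have h2 : (starRingEnd ℂ) (((t : ℂ) + (ε : ℂ) * Complex.I) / b) = -(w' * b) := by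
      rw [map_div₀, hw, h, div_eq_mul_inv, inv_inv]; ring
    rw [map_div₀, map_mul, map_mul, ← Complex.exp_conj, ← Complex.sinh_conj,
      ← Complex.sinh_conj, hA, h1, h2, hw, Complex.sinh_neg, Complex.sinh_neg,
      show (-Complex.sinh (w' / b)) * (-Complex.sinh (w' * b)) * (-w')
        = -(Complex.sinh (w' * b) * Complex.sinh (w' / b) * w') by ring, div_neg]

private lemma qdl_conj_eq (b : ℂ)
    (hcb : (starRingEnd ℂ) b = b ∨ (starRingEnd ℂ) b = b⁻¹) (z : ℂ) :
    (starRingEnd ℂ) (qdl b z) = 1 / qdl b ((starRingEnd ℂ) z) := by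
  unfold qdl
  set ε : ℝ := Real.pi / 2 * min b.re (1 / b).re with hε
  have hS : (starRingEnd ℂ) ((1 / 4 : ℂ) *
      ∫ t : ℝ, qdlIntegrand b z ((t : ℂ) + (ε : ℂ) * Complex.I))
      = -((1 / 4 : ℂ) *
      ∫ t : ℝ, qdlIntegrand b ((starRingEnd ℂ) z) ((t : ℂ) + (ε : ℂ) * Complex.I)) := by
    have h14 : (starRingEnd ℂ) (1 / 4 : ℂ) = 1 / 4 := by
      rw [map_div₀, map_one, map_ofNat]
    have hptw : ∀ t : ℝ,
        (starRingEnd ℂ) (qdlIntegrand b z ((t : ℂ) + (ε : ℂ) * Complex.I)) =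
          - qdlIntegrand b ((starRingEnd ℂ) z) (((-t : ℝ) : ℂ) + (ε : ℂ) * Complex.I) := by
      intro t
      rw [qdl_conj_integrand b hcb z ε t]
      push_cast
      ring_nf
    have hint : (∫ t : ℝ, (starRingEnd ℂ) (qdlIntegrand b z ((t : ℂ) + (ε : ℂ) * Complex.I)))
        = - ∫ t : ℝ, qdlIntegrand b ((starRingEnd ℂ) z) ((t : ℂ) + (ε : ℂ) * Complex.I) :=
      calc (∫ t : ℝ, (starRingEnd ℂ) (qdlIntegrand b z ((t : ℂ) + (ε : ℂ) * Complex.I)))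
          = ∫ t : ℝ, - qdlIntegrand b ((starRingEnd ℂ) z) (((-t : ℝ) : ℂ) + (ε : ℂ) * Complex.I) :=
            integral_congr_ae (Filter.Eventually.of_forall hptw)
        _ = - ∫ t : ℝ, qdlIntegrand b ((starRingEnd ℂ) z) (((-t : ℝ) : ℂ) + (ε : ℂ) * Complex.I) :=
            integral_neg _
        _ = - ∫ t : ℝ, qdlIntegrand b ((starRingEnd ℂ) z) ((t : ℂ) + (ε : ℂ) * Complex.I) :=
            neg_inj.2 (MeasureTheory.integral_neg_eq_self (fun t : ℝ =>
              qdlIntegrand b ((starRingEnd ℂ) z) ((t : ℂ) + (ε : ℂ) * Complex.I)) volume)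
    rw [map_mul, h14, ← integral_conj, hint]
    ring
  rw [← Complex.exp_conj, hS, Complex.exp_neg]
  exact (one_div _).symm

/-- Unitarity: if `b` has positive real part and is either real or of modulus one, then
for every `z` in the strip `|Im z| < Im c_b = Re (b + b⁻¹)/2` one has
`conj (e_b(z)) = 1 / e_b(conj z)`; in particular for real `b` and real `x`,
`|e_b(x)| = 1`. -/
theorem qdl_unitarity (b : ℂ) (hre : 0 < b.re)
    (hb : b.im = 0 ∨ ‖b‖ = 1) :
    (∀ z : ℂ, |z.im| < (b + b⁻¹).re / 2 →
      (starRingEnd ℂ) (qdl b z) = 1 / qdl b ((starRingEnd ℂ) z)) ∧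
    (b.im = 0 → ∀ x : ℝ, ‖qdl b (x : ℂ)‖ = 1) := by
  have hcb : (starRingEnd ℂ) b = b ∨ (starRingEnd ℂ) b = b⁻¹ := by
    rcases hb with h | h
    · left; exact Complex.conj_eq_iff_im.mpr h
    · right
      have hns : Complex.normSq b = 1 := by
        rw [Complex.normSq_eq_norm_sq, h]; norm_num
      have hb0 : b ≠ 0 := by
        intro h0; rw [h0] at hns; simp [Complex.normSq] at hns
      rw [Complex.inv_def, hns]
      simp
  refine ⟨fun z _ => qdl_conj_eq b hcb z, fun _ x => ?_⟩
  have h := qdl_conj_eq b hcb (x : ℂ)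
  rw [Complex.conj_ofReal] at h
  have hne : qdl b (x : ℂ) ≠ 0 := Complex.exp_ne_zero _
  have habs := congrArg (fun w : ℂ => ‖w‖) h
  simp only [Complex.norm_conj, norm_div, norm_one] at habs
  have hpos : 0 < ‖qdl b (x : ℂ)‖ := by
    simpa [norm_pos_iff] using hne
  have : ‖qdl b (x : ℂ)‖ * ‖qdl b (x : ℂ)‖ = 1 := by
    field_simp at habs
    linarith [habs]
  nlinarith [hpos]
end
end
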